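/- Let X be a real normed space, 𝒰 ⊆ X a nonempty set, ū ∈ 𝒰, and J : X → ℝ. Assume there exist a continuous linear functional L on X and a continuous bilinear form B on X × X such that J(ū + w) = J(ū) + L(w) + ½B(w,w) + o(‖w‖²) as w → 0, and that ū is a local minimizer of J over 𝒰 (there exists δ > 0 with J(ū) ≤ J(u) for all u ∈ 𝒰 with ‖u − ū‖ < δ). Then for every v ∈ T_𝒰(ū) with L(v) = 0 and every h ∈ T²_𝒰(ū, v), one has L(h) + ½B(v,v) ≥ 0. -/

import Mathlib

open Filter Topology Metric Asymptotics

/-- The adjacent (intermediate) tangent cone to `K` at `x`. -/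
def adjacentCone {X : Type*} [NormedAddCommGroup X] [NormedSpace ℝ X]
    (K : Set X) (x : X) : Set X :=
  {v | Tendsto (fun ε : ℝ => infDist (x + ε • v) K / ε) (𝓝[>] (0 : ℝ)) (𝓝 0)}

/-- The second-order adjacent subset to `K` at `(x, v)`. -/
def adjacentCone2 {X : Type*} [NormedAddCommGroup X] [NormedSpace ℝ X]
    (K : Set X) (x v : X) : Set X :=
  {h | Tendsto (fun ε : ℝ => infDist (x + ε • v + ε ^ 2 • h) K / ε ^ 2) (𝓝[>] (0 : ℝ)) (𝓝 0)}

theorem second_order_necessary_condition'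
    {X : Type*} [NormedAddCommGroup X] [NormedSpace ℝ X]
    (𝒰 : Set X) (h𝒰 : 𝒰.Nonempty) (ubar : X) (hubar : ubar ∈ 𝒰)
    (J : X → ℝ) (L : X →L[ℝ] ℝ) (B : X →L[ℝ] X →L[ℝ] ℝ)
    (hexp : (fun w : X => J (ubar + w) - J ubar - L w - (1 / 2) * B w w)
      =o[𝓝 (0 : X)] fun w : X => ‖w‖ ^ 2)
    (hmin : ∃ δ : ℝ, 0 < δ ∧ ∀ u ∈ 𝒰, ‖u - ubar‖ < δ → J ubar ≤ J u)
    (v : X) (hLv : L v = 0) (h : X)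
    (hh' : Tendsto (fun ε : ℝ => infDist (ubar + ε • v + ε ^ 2 • h) 𝒰 / ε ^ 2)
      (𝓝[>] (0:ℝ)) (𝓝 0)) : 0 ≤ L h + (1 / 2) * B v v := by
  obtain ⟨δ, hδ, hmin⟩ := hmin
  set l := 𝓝[>] (0:ℝ) with hl
  have hε_pos : ∀ᶠ ε : ℝ in l, 0 < ε := self_mem_nhdsWithin
  set p : ℝ → X := fun ε => ubar + ε • v + ε ^ 2 • h with hp
  have hsel : ∀ ε : ℝ, 0 < ε → ∃ z ∈ 𝒰, dist (p ε) z < infDist (p ε) 𝒰 + ε ^ 3 := by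
    intro ε hε
    exact (infDist_lt_iff h𝒰).1 (lt_add_of_pos_right _ (by positivity))
  choose! z hz𝒰 hzd using hsel
  set w : ℝ → X := fun ε => z ε - ubar with hwdef
  set k : ℝ → X := fun ε => (ε^2)⁻¹ • (w ε - ε • v) with hkdef
  -- (a) k tends to h
  have hk : Tendsto k l (𝓝 h) := by
    rw [tendsto_iff_norm_sub_tendsto_zero]
    have hbound : ∀ᶠ ε in l, ‖k ε - h‖ ≤ infDist (p ε) 𝒰 / ε^2 + ε := by
      filter_upwards [hε_pos] with ε hε
      have hε2 : (ε:ℝ)^2 ≠ 0 := by positivity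
      have hkh : k ε - h = (ε^2)⁻¹ • (z ε - p ε) := by
        calc k ε - h = (ε^2)⁻¹ • (w ε - ε • v) - (ε^2)⁻¹ • ((ε^2) • h) := by
              rw [inv_smul_smul₀ hε2]
          _ = (ε^2)⁻¹ • (z ε - p ε) := by
              rw [← smul_sub]; congr 1; simp only [hwdef, hp]; abel
      rw [hkh, norm_smul, norm_inv, Real.norm_eq_abs, abs_of_pos (by positivity : (0:ℝ) < ε^2)]
      have h1 : ‖z ε - p ε‖ ≤ infDist (p ε) 𝒰 + ε ^ 3 := by
        have := (hzd ε hε).le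
        rwa [dist_eq_norm, norm_sub_rev] at this
      calc (ε^2)⁻¹ * ‖z ε - p ε‖ ≤ (ε^2)⁻¹ * (infDist (p ε) 𝒰 + ε ^ 3) := by gcongr
        _ = infDist (p ε) 𝒰 / ε^2 + ε := by field_simp
    have hg : Tendsto (fun ε : ℝ => infDist (p ε) 𝒰 / ε^2 + ε) l (𝓝 0) := by
      have := hh'.add (tendsto_id.mono_left nhdsWithin_le_nhds : Tendsto (fun ε:ℝ => ε) l (𝓝 0))
      simpa using this
    exact squeeze_zero' (by filter_upwards with ε using norm_nonneg _) hbound hg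
  -- (b) w = ε • (v + ε • k ε)
  have hw_eq : ∀ ε : ℝ, 0 < ε → w ε = ε • (v + ε • k ε) := by
    intro ε hε
    have hε2 : (ε:ℝ)^2 ≠ 0 := by positivity
    have hεk : ε • (ε • k ε) = w ε - ε • v := by
      rw [hkdef, smul_smul, ← sq, smul_inv_smul₀ hε2]
    rw [smul_add, hεk]; abel
  -- (c) w tends to 0
  have h1 : Tendsto (fun ε : ℝ => ε) l (𝓝 0) := tendsto_id.mono_left nhdsWithin_le_nhds
  have hvk : Tendsto (fun ε => v + ε • k ε) l (𝓝 v) := by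
    have : Tendsto (fun ε : ℝ => v + ε • k ε) l (𝓝 (v + (0:ℝ) • h)) :=
      Tendsto.add tendsto_const_nhds (h1.smul hk)
    simpa using this
  have hw0 : Tendsto w l (𝓝 0) := by
    have h2 := h1.smul hvk
    rw [zero_smul] at h2
    exact h2.congr' (by filter_upwards [hε_pos] with ε hε using (hw_eq ε hε).symm)
  -- (d) the remainder
  set E : ℝ → ℝ := fun ε => J (ubar + w ε) - J ubar - L (w ε) - (1/2) * B (w ε) (w ε) with hEdef
  have hE : E =o[l] fun ε => ‖w ε‖^2 := hexp.comp_tendsto hw0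
  have hbig : (fun ε => ‖w ε‖^2) =O[l] fun ε => ε^2 := by
    rw [isBigO_iff]
    refine ⟨(‖v‖+1)^2, ?_⟩
    have hev : ∀ᶠ ε in l, ‖v + ε • k ε‖ < ‖v‖ + 1 :=
      hvk.norm.eventually (gt_mem_nhds (lt_add_one _))
    filter_upwards [hε_pos, hev] with ε hε hlt
    have hwn : ‖w ε‖ = ε * ‖v + ε • k ε‖ := by
      rw [hw_eq ε hε, norm_smul, Real.norm_eq_abs, abs_of_pos hε]
    rw [Real.norm_eq_abs, Real.norm_eq_abs, abs_of_nonneg (by positivity),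
      abs_of_nonneg (sq_nonneg _), hwn]
    have h0 : 0 ≤ ‖v + ε • k ε‖ := norm_nonneg _
    have hsq : ‖v + ε • k ε‖^2 ≤ (‖v‖+1)^2 := by nlinarith [h0, hlt]
    nlinarith [hsq, sq_nonneg ε, sq_nonneg (‖v + ε • k ε‖ * ε)]
  have hE0 : Tendsto (fun ε => E ε / ε^2) l (𝓝 0) :=
    (hE.trans_isBigO hbig).tendsto_div_nhds_zero
  -- (e) the ratio
  set R : ℝ → ℝ := fun ε => (J (z ε) - J ubar) / ε^2 with hRdef
  have heq : ∀ᶠ ε in l, L (k ε) + (1/2) * B (v + ε • k ε) (v + ε • k ε) + E ε / ε^2 = R ε := by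
    filter_upwards [hε_pos] with ε hε
    have hε2 : (ε:ℝ)^2 ≠ 0 := by positivity
    have hz : ubar + w ε = z ε := by simp [hwdef]
    have hLw : L (w ε) = ε^2 * L (k ε) := by
      rw [hw_eq ε hε, map_smul, map_add, map_smul, hLv]
      simp [smul_eq_mul]; ring
    have hBw : B (w ε) (w ε) = ε^2 * B (v + ε • k ε) (v + ε • k ε) := by
      rw [hw_eq ε hε, map_smul]
      simp [smul_eq_mul]; ring
    have hJ : J (z ε) - J ubar
        = ε^2 * L (k ε) + (1/2) * (ε^2 * B (v + ε • k ε) (v + ε • k ε)) + E ε := by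
      have hEe : E ε = J (ubar + w ε) - J ubar - L (w ε) - (1/2) * B (w ε) (w ε) := rfl
      rw [hz, hLw, hBw] at hEe
      linarith
    rw [hRdef]
    simp only [hJ]
    field_simp
  have hBcont : Continuous fun x : X => B x x := by
    have hc : Continuous fun q : X × X => B q.1 q.2 := B.continuous₂
    exact hc.comp (continuous_id.prodMk continuous_id)
  have hRlim : Tendsto R l (𝓝 (L h + (1/2) * B v v + 0)) := by
    refine Tendsto.congr' heq ?_
    exact (((L.continuous.tendsto h).comp hk).add
      ((tendsto_const_nhds.mul ((hBcont.tendsto v).comp hvk)))).add hE0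
  have hnonneg : ∀ᶠ ε in l, 0 ≤ R ε := by
    have hn0 : Tendsto (fun ε => ‖w ε‖) l (𝓝 0) := by simpa using hw0.norm
    have hsmall : ∀ᶠ ε in l, ‖w ε‖ < δ := hn0.eventually (gt_mem_nhds hδ)
    filter_upwards [hε_pos, hsmall] with ε hε hs
    have : J ubar ≤ J (z ε) := hmin _ (hz𝒰 ε hε) (by simpa [hwdef] using hs)
    exact div_nonneg (by linarith) (by positivity)
  have := ge_of_tendsto hRlim hnonneg
  linarith

theorem second_order_necessary_condition
    {X : Type*} [NormedAddCommGroup X] [NormedSpace ℝ X]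
    (𝒰 : Set X) (h𝒰 : 𝒰.Nonempty) (ubar : X) (hubar : ubar ∈ 𝒰)
    (J : X → ℝ) (L : X →L[ℝ] ℝ) (B : X →L[ℝ] X →L[ℝ] ℝ)
    (hexp : (fun w : X => J (ubar + w) - J ubar - L w - (1 / 2) * B w w)
      =o[𝓝 (0 : X)] fun w : X => ‖w‖ ^ 2)
    (hmin : ∃ δ : ℝ, 0 < δ ∧ ∀ u ∈ 𝒰, ‖u - ubar‖ < δ → J ubar ≤ J u) :
    ∀ v ∈ adjacentCone 𝒰 ubar, L v = 0 →
      ∀ h ∈ adjacentCone2 𝒰 ubar v, 0 ≤ L h + (1 / 2) * B v v := by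
  intro v _hv hLv h hh
  exact second_order_necessary_condition' 𝒰 h𝒰 ubar hubar J L B hexp hmin v hLv h hh
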